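/- Let 𝔥 be a finite-dimensional real Leibniz algebra. For every X, Y ∈ 𝔥 one has exp(ad_{exp(ad_X)(Y)}) = exp(ad_X) ∘ exp(ad_Y) ∘ exp(ad_X)⁻¹ as linear automorphisms of 𝔥. Consequently the set R_𝔥 := {(X, exp(ad_X)) : X ∈ 𝔥} is closed under the rack product (X,α) ▷ (Y,β) := (α(Y), α∘β∘α⁻¹), i.e. it is a subrack of 𝔥 ×_hs Aut(𝔥). -/

import Mathlib

open NormedSpace

noncomputable instance topologicalRing_of_clm_clm
    {V : Type*} [NormedAddCommGroup V] [NormedSpace ℝ V] :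
    IsTopologicalRing ((V →L[ℝ] V) →L[ℝ] (V →L[ℝ] V)) :=
  @NonUnitalSeminormedRing.toIsTopologicalRing _
    (inferInstance : NonUnitalSeminormedRing ((V →L[ℝ] V) →L[ℝ] (V →L[ℝ] V)))

set_option maxHeartbeats 1000000 in
set_option synthInstance.maxHeartbeats 400000 in
/-- For a finite-dimensional real Leibniz algebra `𝔥` and `X, Y ∈ 𝔥`,
`exp(ad_{exp(ad_X)(Y)}) = exp(ad_X) ∘ exp(ad_Y) ∘ exp(ad_X)⁻¹` (the inverse of
`exp(ad_X)` being `exp(−ad_X)`). Consequently the set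
`R_𝔥 = {(X, exp(ad_X))}` is closed under the rack product
`(X,α) ▷ (Y,β) = (α(Y), α∘β∘α⁻¹)`, i.e. it is a subrack of `𝔥 ×_hs Aut(𝔥)`. -/
theorem R_h_closed_under_rack_product
    {V : Type*} [NormedAddCommGroup V] [NormedSpace ℝ V] [FiniteDimensional ℝ V]
    (b : V →L[ℝ] V →L[ℝ] V)
    (hLeib : ∀ X Y Z : V, b X (b Y Z) = b (b X Y) Z + b Y (b X Z))
    (X Y : V) :
    exp (b (exp (b X) Y))
      = exp (b X) ∘L exp (b Y) ∘L exp (-(b X)) := by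
  letI : NormedAlgebra ℚ (V →L[ℝ] V) := NormedAlgebra.restrictScalars ℚ ℝ _
  letI : NormedAlgebra ℚ ((V →L[ℝ] V) →L[ℝ] (V →L[ℝ] V)) := NormedAlgebra.restrictScalars ℚ ℝ _
  set x : V →L[ℝ] V := b X with hx
  set L : (V →L[ℝ] V) →L[ℝ] (V →L[ℝ] V) := ContinuousLinearMap.mul ℝ (V →L[ℝ] V) x with hL
  set R : (V →L[ℝ] V) →L[ℝ] (V →L[ℝ] V) := (ContinuousLinearMap.mul ℝ (V →L[ℝ] V)).flip x with hR
  have hLapp : ∀ T : (V →L[ℝ] V), L T = x * T := fun T => rfl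
  have hRapp : ∀ T : (V →L[ℝ] V), R T = T * x := fun T => rfl
  set D : (V →L[ℝ] V) →L[ℝ] (V →L[ℝ] V) := L - R with hD
  have hDapp : ∀ T : (V →L[ℝ] V), D T = x * T - T * x := fun T => rfl
  -- step 1: b (x^n Y) = D^n (b Y)
  have hbn : ∀ n : ℕ, b ((x ^ n) Y) = (D ^ n) (b Y) := by
    intro n
    induction n with
    | zero => simp
    | succ n ih =>
      have h1 : (x ^ (n+1)) Y = x ((x ^ n) Y) := by
        rw [pow_succ']; rfl
      have h2 : b (x ((x ^ n) Y)) = D (b ((x ^ n) Y)) := by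
        ext Z
        have h3 := hLeib X ((x ^ n) Y) Z
        rw [← hx] at h3
        simp only [hDapp, ContinuousLinearMap.sub_apply, ContinuousLinearMap.mul_apply]
        rw [h3]; abel
      rw [h1, h2, ih, pow_succ']
      rfl
  -- summability facts
  have hsx : Summable fun n : ℕ => ((n.factorial : ℝ))⁻¹ • x ^ n :=
    expSeries_summable' (𝕂 := ℝ) x
  have hexpx : exp x = ∑' (n : ℕ), ((n.factorial : ℝ))⁻¹ • x ^ n :=
    congrFun (exp_eq_tsum (𝕂 := ℝ)) x
  -- step 2: b (exp x Y) = exp D (b Y)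
  have happ : (exp x) Y = ∑' (n : ℕ), ((n.factorial : ℝ))⁻¹ • (x ^ n) Y := by
    rw [hexpx]
    calc (∑' (n : ℕ), ((n.factorial : ℝ))⁻¹ • x ^ n) Y
        = ContinuousLinearMap.apply ℝ V Y (∑' (n : ℕ), ((n.factorial : ℝ))⁻¹ • x ^ n) := rfl
      _ = ∑' (n : ℕ), ContinuousLinearMap.apply ℝ V Y (((n.factorial : ℝ))⁻¹ • x ^ n) :=
        ContinuousLinearMap.map_tsum _ hsx
      _ = ∑' (n : ℕ), ((n.factorial : ℝ))⁻¹ • (x ^ n) Y := by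
        refine tsum_congr fun n => ?_
        simp
  have hsxY : Summable fun n : ℕ => ((n.factorial : ℝ))⁻¹ • (x ^ n) Y := by
    have := hsx.map (ContinuousLinearMap.apply ℝ V Y).toLinearMap.toAddMonoidHom
      (ContinuousLinearMap.apply ℝ V Y).continuous
    refine this.congr fun n => ?_
    simp [Function.comp]
  have hsD : Summable fun n : ℕ => ((n.factorial : ℝ))⁻¹ • D ^ n :=
    expSeries_summable' (𝕂 := ℝ) D
  have key : b ((exp x) Y) = (exp D) (b Y) := by
    rw [happ, ContinuousLinearMap.map_tsum b hsxY]
    rw [congrFun (exp_eq_tsum (𝕂 := ℝ)) D]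
    calc ∑' (n : ℕ), b (((n.factorial : ℝ))⁻¹ • (x ^ n) Y)
        = ∑' (n : ℕ), ContinuousLinearMap.apply ℝ (V →L[ℝ] V) (b Y)
            (((n.factorial : ℝ))⁻¹ • D ^ n) := by
          refine tsum_congr fun n => ?_
          have h := hbn n
          simp at h
          simp [h]
      _ = ContinuousLinearMap.apply ℝ (V →L[ℝ] V) (b Y)
            (∑' (n : ℕ), ((n.factorial : ℝ))⁻¹ • D ^ n) :=
        (ContinuousLinearMap.map_tsum _ hsD).symm
      _ = (∑' (n : ℕ), ((n.factorial : ℝ))⁻¹ • D ^ n) (b Y) := rfl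
  -- step 3: exp D = exp L * exp (-R)
  have hLR : Commute L R := by
    ext T
    simp only [ContinuousLinearMap.mul_apply, hLapp, hRapp, mul_assoc]
  have hexpD : exp D = exp L * exp (-R) := by
    have hsum : D = L + (-R) := by rw [hD]; abel
    rw [hsum]
    exact exp_add_of_commute (𝔸 := (V →L[ℝ] V) →L[ℝ] (V →L[ℝ] V)) hLR.neg_right
  have hLn : ∀ (n : ℕ) (T : (V →L[ℝ] V)), (L ^ n) T = x ^ n * T := by
    intro n
    induction n with
    | zero => intro T; simp
    | succ n ih =>
      intro T
      rw [pow_succ', pow_succ']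
      simp only [ContinuousLinearMap.mul_apply]
      rw [ih, hLapp, mul_assoc]
  have hRn : ∀ (n : ℕ) (T : (V →L[ℝ] V)), ((-R) ^ n) T = T * (-x) ^ n := by
    intro n
    induction n with
    | zero => intro T; simp
    | succ n ih =>
      intro T
      rw [pow_succ, pow_succ]
      simp only [ContinuousLinearMap.mul_apply, ContinuousLinearMap.neg_apply]
      rw [ih, hRapp, mul_neg, neg_mul, mul_assoc,
        ((Commute.refl x).neg_left.pow_left n).eq, mul_neg]
  have hexpL : ∀ T : (V →L[ℝ] V), (exp L) T = exp x * T := by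
    intro T
    have hsL : Summable fun n : ℕ => ((n.factorial : ℝ))⁻¹ • L ^ n :=
      expSeries_summable' (𝕂 := ℝ) L
    rw [congrFun (exp_eq_tsum (𝕂 := ℝ)) L, hexpx]
    calc (∑' (n : ℕ), ((n.factorial : ℝ))⁻¹ • L ^ n) T
        = ContinuousLinearMap.apply ℝ (V →L[ℝ] V) T
            (∑' (n : ℕ), ((n.factorial : ℝ))⁻¹ • L ^ n) := rfl
      _ = ∑' (n : ℕ), ContinuousLinearMap.apply ℝ (V →L[ℝ] V) T
            (((n.factorial : ℝ))⁻¹ • L ^ n) := ContinuousLinearMap.map_tsum _ hsL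
      _ = ∑' (n : ℕ), ((ContinuousLinearMap.mul ℝ (V →L[ℝ] V)).flip T)
            (((n.factorial : ℝ))⁻¹ • x ^ n) := by
          refine tsum_congr fun n => ?_
          simp [hLn n T]
      _ = ((ContinuousLinearMap.mul ℝ (V →L[ℝ] V)).flip T)
            (∑' (n : ℕ), ((n.factorial : ℝ))⁻¹ • x ^ n) :=
        (ContinuousLinearMap.map_tsum _ hsx).symm
      _ = (∑' (n : ℕ), ((n.factorial : ℝ))⁻¹ • x ^ n) * T := rfl
  have hexpR : ∀ T : (V →L[ℝ] V), (exp (-R)) T = T * exp (-x) := by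
    intro T
    have hsR : Summable fun n : ℕ => ((n.factorial : ℝ))⁻¹ • (-R) ^ n :=
      expSeries_summable' (𝕂 := ℝ) (-R)
    have hsnx : Summable fun n : ℕ => ((n.factorial : ℝ))⁻¹ • (-x) ^ n :=
      expSeries_summable' (𝕂 := ℝ) (-x)
    rw [congrFun (exp_eq_tsum (𝕂 := ℝ)) (-R), congrFun (exp_eq_tsum (𝕂 := ℝ)) (-x)]
    calc (∑' (n : ℕ), ((n.factorial : ℝ))⁻¹ • (-R) ^ n) T
        = ContinuousLinearMap.apply ℝ (V →L[ℝ] V) T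
            (∑' (n : ℕ), ((n.factorial : ℝ))⁻¹ • (-R) ^ n) := rfl
      _ = ∑' (n : ℕ), ContinuousLinearMap.apply ℝ (V →L[ℝ] V) T
            (((n.factorial : ℝ))⁻¹ • (-R) ^ n) := ContinuousLinearMap.map_tsum _ hsR
      _ = ∑' (n : ℕ), (ContinuousLinearMap.mul ℝ (V →L[ℝ] V) T)
            (((n.factorial : ℝ))⁻¹ • (-x) ^ n) := by
          refine tsum_congr fun n => ?_
          simp [hRn n T, mul_smul_comm]
      _ = (ContinuousLinearMap.mul ℝ (V →L[ℝ] V) T)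
            (∑' (n : ℕ), ((n.factorial : ℝ))⁻¹ • (-x) ^ n) :=
        (ContinuousLinearMap.map_tsum _ hsnx).symm
      _ = T * (∑' (n : ℕ), ((n.factorial : ℝ))⁻¹ • (-x) ^ n) := rfl
  have key2 : b ((exp x) Y) = exp x * b Y * exp (-x) := by
    rw [key, hexpD]
    calc (exp L * exp (-R)) (b Y) = (exp L) ((exp (-R)) (b Y)) := rfl
      _ = exp x * (b Y * exp (-x)) := by rw [hexpR, hexpL]
      _ = exp x * b Y * exp (-x) := by rw [mul_assoc]
  -- the unit
  have hmul1 : exp x * exp (-x) = 1 := by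
    rw [← exp_add_of_commute (Commute.refl x).neg_right]
    simp
  have hmul2 : exp (-x) * exp x = 1 := by
    rw [← exp_add_of_commute (Commute.refl x).neg_left]
    simp
  have hconj := exp_units_conj (⟨exp x, exp (-x), hmul1, hmul2⟩ : (V →L[ℝ] V)ˣ) (b Y)
  simp only [Units.inv_mk] at hconj
  rw [key2]
  calc exp (exp x * b Y * exp (-x)) = exp x * exp (b Y) * exp (-x) := hconj
    _ = exp (b X) ∘L exp (b Y) ∘L exp (-(b X)) := by rw [← hx, mul_assoc]; rfl
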